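/- Let 𝒢 be a locally finite, connected, infinite graph. Then for each vertex v of 𝒢 there exists a proper edge-path ray s_v starting at v such that for every finite subgraph C of 𝒢, only finitely many of the rays s_v intersect C. -/

import Mathlib

section Aux

variable {V : Type*} (G : SimpleGraph V)

/-- `a` and `b` are connected by a walk whose support lies in `T`. -/
def ConnIn (T : Set V) (a b : V) : Prop :=
  ∃ w : G.Walk a b, ∀ y ∈ w.support, y ∈ T

variable {G}

lemma ConnIn.mem_left {T : Set V} {a b : V} (h : ConnIn G T a b) : a ∈ T := by
  obtain ⟨w, hw⟩ := h; exact hw a w.start_mem_support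

lemma ConnIn.mem_right {T : Set V} {a b : V} (h : ConnIn G T a b) : b ∈ T := by
  obtain ⟨w, hw⟩ := h; exact hw b w.end_mem_support

lemma connIn_refl {T : Set V} {a : V} (ha : a ∈ T) : ConnIn G T a a :=
  ⟨SimpleGraph.Walk.nil, by simp [ha]⟩

lemma ConnIn.symm {T : Set V} {a b : V} (h : ConnIn G T a b) : ConnIn G T b a := by
  obtain ⟨w, hw⟩ := h
  exact ⟨w.reverse, fun y hy => hw y (by simpa [SimpleGraph.Walk.support_reverse] using hy)⟩

lemma ConnIn.trans {T : Set V} {a b c : V} (h : ConnIn G T a b) (h' : ConnIn G T b c) :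
    ConnIn G T a c := by
  obtain ⟨w, hw⟩ := h
  obtain ⟨w', hw'⟩ := h'
  refine ⟨w.append w', fun y hy => ?_⟩
  rcases (SimpleGraph.Walk.mem_support_append_iff _ _).1 hy with hy | hy
  · exact hw y hy
  · exact hw' y hy

lemma ConnIn.mono {T T' : Set V} (hTT : T ⊆ T') {a b : V} (h : ConnIn G T a b) :
    ConnIn G T' a b := by
  obtain ⟨w, hw⟩ := h
  exact ⟨w, fun y hy => hTT (hw y hy)⟩

/-- Connectivity within `T` implies connectivity within the `ConnIn`-component. -/
lemma connIn_component {T : Set V} {u x : V} (h : ConnIn G T u x) :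
    ConnIn G {y | ConnIn G T u y} u x := by
  classical
  obtain ⟨w, hw⟩ := h
  refine ⟨w, fun y hy => ?_⟩
  exact ⟨w.takeUntil y hy, fun z hz => hw z (SimpleGraph.Walk.support_takeUntil_subset _ hy hz)⟩

/-- From a vertex through which an infinite set is connected, one can take a step to a
neighbour whose component in the remainder is still infinite. -/
lemma exists_step (hlf : ∀ v : V, (G.neighborSet v).Finite) {S : Set V} {u : V}
    (hS : S.Infinite) (hconnS : ∀ x ∈ S, ConnIn G S u x) :
    ∃ u', G.Adj u u' ∧ u' ∈ S \ {u} ∧ {x | ConnIn G (S \ {u}) u' x}.Infinite := by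
  classical
  by_contra hcon
  push_neg at hcon
  have hcover : S \ {u} ⊆
      ⋃ u' ∈ (G.neighborSet u ∩ (S \ {u})), {x | ConnIn G (S \ {u}) u' x} := by
    rintro x ⟨hxS, hxu⟩
    have hxu' : x ≠ u := hxu
    obtain ⟨w, hw⟩ := hconnS x hxS
    -- take the part of the walk after the last visit of `u`
    have humem : u ∈ w.reverse.support := by
      simp [SimpleGraph.Walk.support_reverse, SimpleGraph.Walk.end_mem_support]
    set t : G.Walk x u := w.reverse.takeUntil u humem with ht
    have htS : ∀ y ∈ t.support, y ∈ S := fun y hy =>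
      hw y (by
        have := SimpleGraph.Walk.support_takeUntil_subset _ humem hy
        simpa [SimpleGraph.Walk.support_reverse] using this)
    have hcount : t.support.count u = 1 :=
      SimpleGraph.Walk.count_support_takeUntil_eq_one _ humem
    obtain ⟨z, hadj, q, hq⟩ := SimpleGraph.Walk.exists_eq_cons_of_ne (Ne.symm hxu') t.reverse
    have hsupp : t.reverse.support = u :: q.support := by rw [hq]; simp
    have hqu : u ∉ q.support := by
      have : t.reverse.support.count u = 1 := by
        rwa [SimpleGraph.Walk.support_reverse, List.count_reverse]
      rw [hsupp] at this
      simp only [List.count_cons_self] at this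
      intro hc
      have := List.count_pos_iff.2 hc
      omega
    have hqS : ∀ y ∈ q.support, y ∈ S \ ({u} : Set V) := by
      intro y hy
      have hyt : y ∈ t.support := by
        have : y ∈ t.reverse.support := by rw [hsupp]; exact List.mem_cons_of_mem _ hy
        simpa [SimpleGraph.Walk.support_reverse] using this
      refine ⟨htS y hyt, fun hyu => ?_⟩
      have hyeq : y = u := hyu
      exact hqu (hyeq ▸ hy)
    have hz : z ∈ S \ ({u} : Set V) := hqS z q.start_mem_support
    refine Set.mem_biUnion (show z ∈ G.neighborSet u ∩ (S \ {u}) from ⟨hadj, hz⟩) ?_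
    exact ⟨q, hqS⟩
  have hfin : (⋃ u' ∈ (G.neighborSet u ∩ (S \ {u})), {x | ConnIn G (S \ {u}) u' x}).Finite := by
    refine Set.Finite.biUnion ((hlf u).inter_of_left _) ?_
    rintro u' ⟨hadj, hmem⟩
    exact hcon u' hadj hmem
  exact (hS.diff (Set.finite_singleton u)) (hfin.subset hcover)

/-- König's lemma: an injective ray inside an infinite set connected through `v`. -/
lemma exists_ray (hlf : ∀ v : V, (G.neighborSet v).Finite) {S₀ : Set V} {v : V}
    (hv : v ∈ S₀) (hS : S₀.Infinite) (hconnS : ∀ x ∈ S₀, ConnIn G S₀ v x) :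
    ∃ r : ℕ → V, r 0 = v ∧ (∀ n, G.Adj (r n) (r (n + 1))) ∧ (∀ n, r n ∈ S₀) ∧
      Function.Injective r := by
  classical
  let Good : V × Set V → Prop := fun p =>
    p.1 ∈ p.2 ∧ p.2.Infinite ∧ ∀ x ∈ p.2, ConnIn G p.2 p.1 x
  let State := {p : V × Set V // Good p}
  have key : ∀ s : State, ∃ t : State, G.Adj s.1.1 t.1.1 ∧ t.1.2 ⊆ s.1.2 \ {s.1.1} := by
    rintro ⟨⟨u, S⟩, hu, hSinf, hconn⟩
    obtain ⟨u', hadj, hu', hinf⟩ := exists_step hlf hSinf hconn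
    refine ⟨⟨(u', {x | ConnIn G (S \ {u}) u' x}), ?_, hinf, ?_⟩, hadj, ?_⟩
    · exact connIn_refl hu'
    · intro x hx
      exact connIn_component hx
    · intro x hx
      exact ConnIn.mem_right hx
  choose nxt hadj hsub using key
  let f : ℕ → State := fun n => Nat.rec
    ⟨(v, S₀), hv, hS, hconnS⟩ (fun _ s => nxt s) n
  have hf : ∀ n, f (n + 1) = nxt (f n) := fun n => rfl
  have hchain : ∀ m n, m < n → (f n).1.2 ⊆ (f m).1.2 \ {(f m).1.1} := by
    intro m n hmn
    induction n with
    | zero => omega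
    | succ k ih =>
      rcases Nat.lt_succ_iff_lt_or_eq.1 hmn with h | h
      · exact fun x hx => ih h ((hsub (f k)) hx).1
      · rw [h]; exact hsub (f k)
  have hmem : ∀ n, (f n).1.1 ∈ (f n).1.2 := fun n => (f n).2.1
  refine ⟨fun n => (f n).1.1, rfl, fun n => hadj (f n), ?_, ?_⟩
  · intro n
    cases n with
    | zero => exact hv
    | succ k =>
      have := hchain 0 (k + 1) (Nat.succ_pos k) (hmem (k + 1))
      exact this.1
  · intro m n hmn
    by_contra hne
    rcases Nat.lt_or_ge m n with h | h
    · have := hchain m n h (hmem n)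
      exact this.2 (by simp [hmn])
    · have hlt : n < m := lt_of_le_of_ne h fun e => hne e.symm
      have := hchain n m hlt (hmem m)
      exact this.2 (by simp [← hmn])

/-- Each vertex has a neighbour one step closer to the base vertex. -/
lemma exists_adj_dist_pred (hconn : G.Connected) {v0 x : V} (h : G.dist v0 x ≠ 0) :
    ∃ z, G.Adj z x ∧ G.dist v0 z + 1 = G.dist v0 x := by
  obtain ⟨p, hp⟩ := hconn.exists_walk_length_eq_dist v0 x
  have hxv0 : x ≠ v0 := by
    intro e; subst e; simp [SimpleGraph.dist_self] at h
  obtain ⟨z, hadj, q, hq⟩ := SimpleGraph.Walk.exists_eq_cons_of_ne hxv0 p.reverse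
  have hlq : q.length = p.length - 1 := by
    have : p.reverse.length = q.length + 1 := by rw [hq]; simp
    have hrev : p.reverse.length = p.length := SimpleGraph.Walk.length_reverse p
    omega
  have h1 : G.dist v0 z ≤ p.length - 1 := by
    have := SimpleGraph.dist_le q.reverse
    simpa [SimpleGraph.Walk.length_reverse, hlq, SimpleGraph.dist_comm] using this
  have h2 : G.dist v0 x ≤ G.dist v0 z + 1 := by
    have htri := hconn.dist_triangle (u := v0) (v := z) (w := x)
    have : G.dist z x = 1 := SimpleGraph.dist_eq_one_iff_adj.2 hadj.symm
    omega
  refine ⟨z, hadj.symm, ?_⟩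
  omega

/-- Every vertex outside the ball of radius `R` is connected, within the complement of that
ball, to a vertex on the sphere of radius `R`. -/
lemma exists_conn_sphere (hconn : G.Connected) (v0 : V) (R : ℕ) :
    ∀ x, R ≤ G.dist v0 x →
      ∃ y, G.dist v0 y = R ∧ ConnIn G {z | R ≤ G.dist v0 z} y x := by
  suffices H : ∀ m x, G.dist v0 x = R + m →
      ∃ y, G.dist v0 y = R ∧ ConnIn G {z | R ≤ G.dist v0 z} y x by
    intro x hx
    exact H (G.dist v0 x - R) x (by omega)
  intro m
  induction m with
  | zero =>
    intro x hx
    exact ⟨x, by omega, connIn_refl (by simp; omega)⟩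
  | succ k ih =>
    intro x hx
    have hne : G.dist v0 x ≠ 0 := by omega
    obtain ⟨z, hadj, hz⟩ := exists_adj_dist_pred hconn hne
    obtain ⟨y, hy, w, hw⟩ := ih z (by omega)
    refine ⟨y, hy, w.concat hadj, fun t ht => ?_⟩
    rw [SimpleGraph.Walk.support_concat] at ht
    rcases List.mem_append.1 ht with ht | ht
    · exact hw t ht
    · simp only [List.mem_singleton] at ht
      subst ht
      simp only [Set.mem_setOf_eq]
      omega

/-- Balls are finite in a locally finite connected graph. -/
lemma ball_finite (hconn : G.Connected) (hlf : ∀ v : V, (G.neighborSet v).Finite) (v0 : V) :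
    ∀ R : ℕ, {x | G.dist v0 x < R}.Finite := by
  intro R
  induction R with
  | zero => simp
  | succ k ih =>
    have hsub : {x | G.dist v0 x < k + 1} ⊆
        {x | G.dist v0 x < k} ∪ ({v0} ∪ ⋃ z ∈ {z | G.dist v0 z < k}, G.neighborSet z) := by
      intro x hx
      simp only [Set.mem_setOf_eq] at hx
      rcases Nat.lt_or_ge (G.dist v0 x) k with h | h
      · exact Or.inl h
      · have hk : G.dist v0 x = k := by omega
        by_cases hx0 : x = v0
        · exact Or.inr (Or.inl (by simp [hx0]))
        · have hne : G.dist v0 x ≠ 0 := by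
            intro e
            exact hx0 (hconn.dist_eq_zero_iff.1 e).symm
          obtain ⟨z, hadj, hz⟩ := exists_adj_dist_pred hconn hne
          exact Or.inr (Or.inr (Set.mem_biUnion
            (show z ∈ {z | G.dist v0 z < k} from by simp only [Set.mem_setOf_eq]; omega) hadj))
    refine Set.Finite.subset ?_ hsub
    exact (ih.union ((Set.finite_singleton v0).union (Set.Finite.biUnion ih fun z _ => hlf z)))

end Aux

/-- In a locally finite, connected, infinite graph, one may choose at each vertex `v` a proper
ray `r v` starting at `v` so that every finite set of vertices meets only finitely many of
the chosen rays. -/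
theorem exists_proper_rays_escaping {V : Type*} (G : SimpleGraph V)
    (hlf : ∀ v : V, (G.neighborSet v).Finite) (hconn : G.Connected) (hinf : Infinite V) :
    ∃ r : V → ℕ → V,
      (∀ v : V, r v 0 = v) ∧
      (∀ (v : V) (n : ℕ), G.Adj (r v n) (r v (n + 1))) ∧
      (∀ C : Set V, C.Finite → ∀ v : V, {n : ℕ | r v n ∈ C}.Finite) ∧
      (∀ C : Set V, C.Finite → {v : V | ∃ n : ℕ, r v n ∈ C}.Finite) := by
  classical
  obtain ⟨v0⟩ : Nonempty V := inferInstance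
  set d : V → ℕ := G.dist v0 with hd
  -- the component of `v` outside the ball of radius `kk` is infinite, and `kk ≤ d v`
  set P : V → ℕ → Prop := fun v kk =>
    kk ≤ d v ∧ {x | ConnIn G {z | kk ≤ d z} v x}.Infinite with hP
  have hP0 : ∀ v, P v 0 := by
    intro v
    refine ⟨Nat.zero_le _, ?_⟩
    have : {x | ConnIn G {z | 0 ≤ d z} v x} = Set.univ := by
      ext x
      simp only [Set.mem_univ, iff_true, Set.mem_setOf_eq]
      obtain ⟨w⟩ := hconn v x
      exact ⟨w, fun y _ => by simp⟩
    rw [this]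
    exact Set.infinite_univ
  set k : V → ℕ := fun v => Nat.findGreatest (P v) (d v) with hk
  have hPk : ∀ v, P v (k v) := fun v =>
    Nat.findGreatest_spec (Nat.zero_le _) (hP0 v)
  set S : V → Set V := fun v => {x | ConnIn G {z | k v ≤ d z} v x} with hS
  have hvS : ∀ v, v ∈ S v := fun v => connIn_refl (by simpa using (hPk v).1)
  have hSinf : ∀ v, (S v).Infinite := fun v => (hPk v).2
  have hSconn : ∀ v, ∀ x ∈ S v, ConnIn G (S v) v x := fun v x hx => connIn_component hx
  choose r h0 hadj hmem hinj using fun v => exists_ray hlf (hvS v) (hSinf v) (hSconn v)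
  refine ⟨r, h0, hadj, ?_, ?_⟩
  · intro C hC v
    exact Set.Finite.preimage ((hinj v).injOn) hC
  · intro C hC
    -- choose a radius R containing C
    obtain ⟨R, hR⟩ : ∃ R : ℕ, ∀ x ∈ C, d x < R := by
      obtain ⟨B, hB⟩ := (hC.image d).bddAbove
      exact ⟨B + 1, fun x hx => by
        have := hB (Set.mem_image_of_mem d hx); omega⟩
    -- vertices whose ray meets C have k v < R
    have hstep1 : {v : V | ∃ n, r v n ∈ C} ⊆ {v : V | k v < R} := by
      intro v hv
      obtain ⟨n, hn⟩ := hv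
      by_contra hge
      simp only [Set.mem_setOf_eq, not_lt] at hge
      have h1 : r v n ∈ S v := hmem v n
      have h2 : k v ≤ d (r v n) := by
        have := ConnIn.mem_right h1
        simpa using this
      have := hR _ hn
      omega
    refine Set.Finite.subset ?_ hstep1
    -- vertices with k v < R : either in the ball, or in a finite component outside it
    have hstep2 : {v : V | k v < R} ⊆
        {x | d x < R} ∪
          ⋃ y ∈ {y | d y = R ∧ {x | ConnIn G {z | R ≤ d z} y x}.Finite},
            {x | ConnIn G {z | R ≤ d z} y x} := by
      intro v hv
      simp only [Set.mem_setOf_eq] at hv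
      by_cases hball : d v < R
      · exact Or.inl hball
      · push_neg at hball
        have hfin : {x | ConnIn G {z | R ≤ d z} v x}.Finite := by
          by_contra hinf'
          have : R ≤ k v := Nat.le_findGreatest hball ⟨hball, hinf'⟩
          omega
        obtain ⟨y, hy, hyc⟩ := exists_conn_sphere hconn v0 R v hball
        have hcompeq : {x | ConnIn G {z | R ≤ d z} y x} = {x | ConnIn G {z | R ≤ d z} v x} := by
          ext x
          constructor
          · intro hx
            exact (hyc.symm).trans hx
          · intro hx
            exact hyc.trans hx
        refine Or.inr (Set.mem_biUnion ?_ hyc)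
        exact ⟨hy, by rw [hcompeq]; exact hfin⟩
    refine Set.Finite.subset ?_ hstep2
    refine (ball_finite hconn hlf v0 R).union ?_
    refine Set.Finite.biUnion ?_ ?_
    · refine Set.Finite.subset (ball_finite hconn hlf v0 (R + 1)) ?_
      rintro y ⟨hy, -⟩
      simp only [Set.mem_setOf_eq]
      simp only [hd] at hy
      omega
    · rintro y ⟨-, hyfin⟩
      exact hyfin
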